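/- Let A, B, C, D ∈ 𝔠 with A ≠ B and C ≠ D, and suppose B − A and D − C are linearly independent over ℝ (so that lines AB and CD are not parallel). If S ∈ ℂ lies on line AB and on line CD, then S ∈ 𝔠. In other words, the intersection point of two non-parallel lines through compass-constructable points is compass-constructable. -/

import Mathlib

local notation "conj'" => starRingEnd ℂ

/-- The set 𝔠 of compass-constructable points in the plane ℂ: the smallest set
containing 0 and 1 and closed under taking intersection points of two distinct
circles whose centers and radius-defining points are constructable. -/
inductive Compass : ℂ → Prop
  | zero : Compass 0
  | one : Compass 1
  | circle_circle (a b c d z : ℂ) :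
      Compass a → Compass b → Compass c → Compass d →
      ‖z - a‖ = ‖b - a‖ →
      ‖z - c‖ = ‖d - c‖ →
      {w : ℂ | ‖w - a‖ = ‖b - a‖} ≠
        {w : ℂ | ‖w - c‖ = ‖d - c‖} →
      Compass z


/-- Two circles with distinct centers (and nonneg radii) are distinct as sets. -/
lemma circles_ne {A B : ℂ} {r s : ℝ} (hr : 0 ≤ r) (hs : 0 ≤ s) (hAB : A ≠ B) :
    {w : ℂ | ‖w - A‖ = r} ≠ {w : ℂ | ‖w - B‖ = s} := by
  intro h
  apply hAB
  have mem₁ : ∀ w : ℂ, ‖w - A‖ = r → ‖w - B‖ = s := by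
    intro w hw; exact (Set.ext_iff.mp h w).mp hw
  have habs : ∀ t : ℝ, 0 ≤ t → ‖(t : ℂ)‖ = t := fun t ht => by
    rw [Complex.norm_real, Real.norm_eq_abs]; exact _root_.abs_of_nonneg ht
  by_cases hr0 : r = 0
  · subst hr0
    have mem₂ : ∀ w : ℂ, ‖w - B‖ = s → ‖w - A‖ = 0 := by
      intro w hw; exact (Set.ext_iff.mp h w).mpr hw
    have h₁ : ‖B + s - A‖ = 0 := by
      apply mem₂; rw [add_sub_cancel_left]; exact habs s hs
    have h₂ : ‖B - s - A‖ = 0 := by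
      apply mem₂
      have : B - (s:ℂ) - B = -(s:ℂ) := by ring
      rw [this, norm_neg]; exact habs s hs
    have e₁ : B + (s:ℂ) - A = 0 := by
      rwa [norm_eq_zero] at h₁
    have e₂ : B - (s:ℂ) - A = 0 := by
      rwa [norm_eq_zero] at h₂
    linear_combination (-e₁ - e₂)/2
  · have k₁ : ‖A + r - B‖ = s := by
      apply mem₁; rw [add_sub_cancel_left]; exact habs r hr
    have k₂ : ‖A - r - B‖ = s := by
      apply mem₁
      have : A - (r:ℂ) - A = -(r:ℂ) := by ring
      rw [this, norm_neg]; exact habs r hr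
    have k₃ : ‖A + r * Complex.I - B‖ = s := by
      apply mem₁; rw [add_sub_cancel_left, norm_mul, Complex.norm_I, mul_one]; exact habs r hr
    have k₄ : ‖A - r * Complex.I - B‖ = s := by
      apply mem₁
      have : A - (r:ℂ) * Complex.I - A = -((r:ℂ) * Complex.I) := by ring
      rw [this, norm_neg, norm_mul, Complex.norm_I, mul_one]; exact habs r hr
    have n₁ : Complex.normSq (A + r - B) = Complex.normSq (A - r - B) := by
      rw [← Complex.sq_norm, ← Complex.sq_norm, k₁, k₂]
    have n₂ : Complex.normSq (A + r * Complex.I - B) =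
        Complex.normSq (A - r * Complex.I - B) := by
      rw [← Complex.sq_norm, ← Complex.sq_norm, k₃, k₄]
    simp only [Complex.normSq_apply, Complex.add_re, Complex.add_im, Complex.sub_re,
      Complex.sub_im, Complex.ofReal_re, Complex.ofReal_im, Complex.mul_re, Complex.mul_im,
      Complex.I_re, Complex.I_im] at n₁ n₂
    have hr' : r ≠ 0 := hr0
    have h4 : r * (A.re - B.re) = 0 := by linear_combination n₁ / 4
    have h5 : r * (A.im - B.im) = 0 := by linear_combination n₂ / 4
    have hre : A.re = B.re := by
      have := (mul_eq_zero.mp h4).resolve_left hr'; linarith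
    have him : A.im = B.im := by
      have := (mul_eq_zero.mp h5).resolve_left hr'; linarith
    exact Complex.ext hre him

noncomputable section

/-- Reflection of `z` in the line through `A` and `B`. -/
def creflect (A B z : ℂ) : ℂ := A + (B - A) * conj' (z - A) / conj' (B - A)

/-- Inversion of `X` in the unit circle centred at `O`. -/
def cinvert (O X : ℂ) : ℂ := O + (conj' (X - O))⁻¹

/-- A primitive sixth root of unity. -/
def w3 : ℂ := (1/2 : ℝ) + (Real.sqrt 3 / 2 : ℝ) * Complex.I

lemma sqrt3_sq : Real.sqrt 3 ^ 2 = 3 := Real.sq_sqrt (by norm_num)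

lemma abs_eq_of_sq {z : ℂ} {t : ℝ} (h : Complex.normSq z = t ^ 2) (ht : 0 ≤ t) :
    ‖z‖ = t := by
  rw [Complex.norm_def, h, Real.sqrt_sq ht]

lemma normSq_w3 : Complex.normSq w3 = 1 := by
  simp only [w3, Complex.normSq_add_mul_I]
  nlinarith [sqrt3_sq]

lemma abs_w3 : ‖w3‖ = 1 := by
  have := normSq_w3; apply abs_eq_of_sq <;> simp [this]

lemma w3_re : w3.re = 1/2 := by simp [w3]

lemma w3_im : w3.im = Real.sqrt 3 / 2 := by simp [w3]

lemma w3_im_pos : 0 < w3.im := by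
  rw [w3_im]; positivity

lemma w3_ne_zero : w3 ≠ 0 := by
  intro h; have := w3_im_pos; rw [h] at this; simp at this

lemma w3_ne_one : w3 ≠ 1 := by
  intro h; have := w3_im_pos; rw [h] at this; simp at this

lemma w3_sq : w3 * w3 = w3 - 1 := by
  apply Complex.ext
  · simp only [Complex.mul_re, Complex.sub_re, Complex.one_re, w3_re, w3_im]
    nlinarith [sqrt3_sq]
  · simp only [Complex.mul_im, Complex.sub_im, Complex.one_im, w3_re, w3_im]
    ring

lemma abs_w3_sub_one : ‖w3 - 1‖ = 1 := by
  apply abs_eq_of_sq _ zero_le_one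
  have h : Complex.normSq (w3 - 1) = Complex.normSq w3 - 2 * w3.re + 1 := by
    simp [Complex.normSq_apply, Complex.sub_re, Complex.sub_im]; ring
  rw [h, normSq_w3]
  have : w3.re = 1/2 := by simp [w3]
  rw [this]; norm_num

lemma compass_reflect {A B z : ℂ} (hA : Compass A) (hB : Compass B) (hz : Compass z)
    (hAB : A ≠ B) : Compass (creflect A B z) := by
  have hBA : B - A ≠ 0 := sub_ne_zero.mpr (Ne.symm hAB)
  have hBA' : conj' (B - A) ≠ 0 := by
    rw [starRingEnd_apply]; exact star_ne_zero.mpr hBA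
  have habs : ‖B - A‖ ≠ 0 := norm_ne_zero_iff.mpr hBA
  refine Compass.circle_circle A z B z _ hA hz hB hz ?_ ?_ ?_
  · have h1 : creflect A B z - A = (B - A) * conj' (z - A) / conj' (B - A) := by
      unfold creflect; ring
    rw [h1, norm_div, norm_mul, Complex.norm_conj, Complex.norm_conj,
      mul_comm, mul_div_assoc, div_self habs, mul_one]
  · have h2 : creflect A B z - B = (B - A) * conj' (z - B) / conj' (B - A) := by
      rw [eq_div_iff hBA']
      unfold creflect
      have e : (A + (B - A) * conj' (z - A) / conj' (B - A) - B) * conj' (B - A)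
          = (A - B) * conj' (B - A) + (B - A) * conj' (z - A) / conj' (B - A) * conj' (B - A) := by
        ring
      rw [e, div_mul_cancel₀ _ hBA', map_sub, map_sub, map_sub]
      ring
    rw [h2, norm_div, norm_mul, Complex.norm_conj, Complex.norm_conj,
      mul_comm, mul_div_assoc, div_self habs, mul_one]
  · exact circles_ne (norm_nonneg _) (norm_nonneg _) hAB

lemma compass_rot {p x : ℂ} (hp : Compass p) (hx : Compass x) (hne : x ≠ p) :
    Compass (p + (x - p) * w3) := by
  refine Compass.circle_circle p x x p _ hp hx hx hp ?_ ?_ ?_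
  · rw [add_sub_cancel_left, norm_mul, abs_w3, mul_one]
  · have h : p + (x - p) * w3 - x = (x - p) * (w3 - 1) := by ring
    rw [h, norm_mul, abs_w3_sub_one, mul_one]
    exact norm_sub_rev x p
  · exact circles_ne (norm_nonneg _) (norm_nonneg _) (fun h => hne h.symm)

lemma compass_antipode {p q : ℂ} (hp : Compass p) (hq : Compass q) (hne : q ≠ p) :
    Compass (2 * p - q) := by
  have hqp : q - p ≠ 0 := sub_ne_zero.mpr hne
  set z₁ := p + (q - p) * w3 with hz₁
  have hz₁c : Compass z₁ := compass_rot hp hq hne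
  have hz₁ne : z₁ ≠ p := by
    intro h
    have : (q - p) * w3 = 0 := by rw [hz₁] at h; linear_combination h
    rcases mul_eq_zero.mp this with h' | h'
    · exact hqp h'
    · exact w3_ne_zero h'
  set z₂ := p + (z₁ - p) * w3 with hz₂
  have hz₂c : Compass z₂ := compass_rot hp hz₁c hz₁ne
  have hz₂eq : z₂ = p + (q - p) * (w3 - 1) := by
    rw [hz₂, hz₁]; linear_combination (q - p) * w3_sq
  have hz₂ne : z₂ ≠ p := by
    rw [hz₂eq]; intro h
    have : (q - p) * (w3 - 1) = 0 := by linear_combination h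
    rcases mul_eq_zero.mp this with h' | h'
    · exact hqp h'
    · exact w3_ne_one (by linear_combination h')
  have key : 2 * p - q = p + (z₂ - p) * w3 := by
    rw [hz₂eq]; linear_combination (p - q) * w3_sq
  rw [key]
  exact compass_rot hp hz₂c hz₂ne

lemma compass_double {O X : ℂ} (hO : Compass O) (hX : Compass X) (hne : X ≠ O) :
    ∀ n : ℕ, Compass (O + 2 ^ n * (X - O))
  | 0 => by simpa using hX
  | (n+1) => by
    have ih := compass_double hO hX hne n
    have hne' : O + 2 ^ n * (X - O) ≠ O := by
      intro h
      have h2 : (2:ℂ) ^ n * (X - O) = 0 := by linear_combination h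
      rcases mul_eq_zero.mp h2 with h' | h'
      · exact (pow_ne_zero n two_ne_zero) h'
      · exact sub_ne_zero.mpr hne h'
    have := compass_antipode ih hO (fun h => hne' h.symm)
    have heq : 2 * (O + 2 ^ n * (X - O)) - O = O + 2 ^ (n+1) * (X - O) := by ring
    rwa [heq] at this




/-- Inversion formula as a quotient by the square of the distance. -/
lemma cinvert_eq {O X : ℂ} (h : X ≠ O) :
    cinvert O X = O + (X - O) / ((‖X - O‖ : ℂ))^2 := by
  have hc : X - O ≠ 0 := sub_ne_zero.mpr h
  have hcc : conj' (X - O) ≠ 0 := by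
    rw [starRingEnd_apply]; exact star_ne_zero.mpr hc
  have habs : ((‖X - O‖ : ℂ))^2 = (X - O) * conj' (X - O) := by
    rw [Complex.mul_conj, Complex.normSq_eq_norm_sq]
    push_cast; ring
  unfold cinvert
  rw [habs, div_mul_cancel_left₀ hc]

lemma abs_cinvert_sub {O X : ℂ} (h : X ≠ O) :
    ‖cinvert O X - O‖ = (‖X - O‖)⁻¹ := by
  have hc : X - O ≠ 0 := sub_ne_zero.mpr h
  have : cinvert O X - O = (conj' (X - O))⁻¹ := by unfold cinvert; ring
  rw [this, norm_inv, Complex.norm_conj]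

lemma cinvert_ne {O X : ℂ} (h : X ≠ O) : cinvert O X ≠ O := by
  intro he
  have hc : X - O ≠ 0 := sub_ne_zero.mpr h
  have : ‖cinvert O X - O‖ = 0 := by rw [he]; simp
  rw [abs_cinvert_sub h] at this
  exact (inv_ne_zero (norm_ne_zero_iff.mpr hc)) this

lemma cinvert_cinvert {O X : ℂ} (h : X ≠ O) : cinvert O (cinvert O X) = X := by
  have hc : X - O ≠ 0 := sub_ne_zero.mpr h
  have hcc : conj' (X - O) ≠ 0 := by
    rw [starRingEnd_apply]; exact star_ne_zero.mpr hc
  unfold cinvert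
  rw [add_sub_cancel_left, map_inv₀, Complex.conj_conj, inv_inv]
  ring

/-- compass inversion when the point is far enough from the centre. -/
lemma compass_invert_far {O E X : ℂ} (hO : Compass O) (hE : Compass E) (hX : Compass X)
    (hOE : ‖E - O‖ = 1) (hfar : 1/2 < ‖X - O‖) :
    Compass (cinvert O X) := by
  set d : ℝ := ‖X - O‖ with hd
  have hd0 : 0 < d := lt_trans (by norm_num) hfar
  have hXO : X ≠ O := by
    intro h; rw [h] at hd; simp at hd; rw [hd] at hd0; exact lt_irrefl _ hd0
  have hc : X - O ≠ 0 := sub_ne_zero.mpr hXO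
  have hdne : d ≠ 0 := ne_of_gt hd0
  have hdc : ((d:ℝ) : ℂ) ≠ 0 := Complex.ofReal_ne_zero.mpr hdne
  have hyarg : 0 < 1 - 1/(4*d^2) := by
    have h4 : 1 < 4 * d^2 := by nlinarith
    have : 1/(4*d^2) < 1 := by
      rw [div_lt_one (by positivity)]; exact h4
    linarith
  set y : ℝ := Real.sqrt (1 - 1/(4*d^2)) with hy
  have hy2 : y^2 = 1 - 1/(4*d^2) := Real.sq_sqrt (le_of_lt hyarg)
  have hy0 : 0 < y := Real.sqrt_pos.mpr hyarg
  set k : ℂ := ((1/(2*d^2) : ℝ) : ℂ) + ((y/d : ℝ) : ℂ) * Complex.I with hk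
  set kb : ℂ := ((1/(2*d^2) : ℝ) : ℂ) + ((-(y/d) : ℝ) : ℂ) * Complex.I with hkb
  have hreal : (1/(2*d^2))^2 + (y/d)^2 = (1/d)^2 := by
    rw [div_pow, div_pow, div_pow, hy2]
    field_simp
    ring
  have hnk : Complex.normSq k = (1/d)^2 := by
    rw [hk, Complex.normSq_add_mul_I]; exact hreal
  have hnkb : Complex.normSq kb = (1/d)^2 := by
    rw [hkb, Complex.normSq_add_mul_I]
    linear_combination hreal
  have habsk : ‖k‖ = 1/d := abs_eq_of_sq hnk (by positivity)
  have habskb : ‖kb‖ = 1/d := abs_eq_of_sq hnkb (by positivity)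
  have ha2 : 2 * (1/(2*d^2)) = (1/d)^2 := by
    field_simp
  have hreal1 : (1/(2*d^2) - 1)^2 + (y/d)^2 = 1 := by
    linear_combination hreal - ha2
  have hk1 : Complex.normSq (k - 1) = 1 := by
    have : k - 1 = ((1/(2*d^2) - 1 : ℝ) : ℂ) + ((y/d : ℝ) : ℂ) * Complex.I := by
      rw [hk]; push_cast; ring
    rw [this, Complex.normSq_add_mul_I, hreal1]
  have hkb1 : Complex.normSq (kb - 1) = 1 := by
    have : kb - 1 = ((1/(2*d^2) - 1 : ℝ) : ℂ) + ((-(y/d) : ℝ) : ℂ) * Complex.I := by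
      rw [hkb]; push_cast; ring
    rw [this, Complex.normSq_add_mul_I]
    linear_combination hreal1
  have habsk1 : ‖k - 1‖ = 1 := abs_eq_of_sq (by rw [hk1]; norm_num) zero_le_one
  have habskb1 : ‖kb - 1‖ = 1 := abs_eq_of_sq (by rw [hkb1]; norm_num) zero_le_one
  set U : ℂ := O + (X - O) * k with hU
  set V : ℂ := O + (X - O) * kb with hV
  have habsc : ‖X - O‖ = d := rfl
  have hUc : Compass U := by
    refine Compass.circle_circle O E X O _ hO hE hX hO ?_ ?_ ?_
    · rw [hU, add_sub_cancel_left, norm_mul, habsc, habsk, hOE]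
      field_simp
    · have e : U - X = (X - O) * (k - 1) := by rw [hU]; ring
      rw [e, norm_mul, habsc, habsk1, mul_one, norm_sub_rev]
    · exact circles_ne (norm_nonneg _) (norm_nonneg _) (fun h => hXO h.symm)
  have hVc : Compass V := by
    refine Compass.circle_circle O E X O _ hO hE hX hO ?_ ?_ ?_
    · rw [hV, add_sub_cancel_left, norm_mul, habsc, habskb, hOE]
      field_simp
    · have e : V - X = (X - O) * (kb - 1) := by rw [hV]; ring
      rw [e, norm_mul, habsc, habskb1, mul_one, norm_sub_rev]
    · exact circles_ne (norm_nonneg _) (norm_nonneg _) (fun h => hXO h.symm)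
  have hUV : U ≠ V := by
    intro h
    have h1 : (X - O) * k = (X - O) * kb := by
      rw [hU, hV] at h; linear_combination h
    have h2 : k = kb := mul_left_cancel₀ hc h1
    have h3 : k.im = kb.im := by rw [h2]
    rw [hk, hkb] at h3
    simp only [Complex.add_im, Complex.ofReal_im, Complex.mul_im, Complex.ofReal_re,
      Complex.I_im, Complex.I_re] at h3
    have : y/d = -(y/d) := by simpa using h3
    have hyd : 0 < y/d := by positivity
    linarith
  have hsumk : k + kb = ((1/d^2 : ℝ) : ℂ) := by
    rw [hk, hkb]
    push_cast
    field_simp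
    ring
  set Z : ℂ := O + (X - O) * ((1/d^2 : ℝ) : ℂ) with hZ
  have hZc : Compass Z := by
    refine Compass.circle_circle U O V O _ hUc hO hVc hO ?_ ?_ ?_
    · have e1 : Z - U = (X - O) * kb := by
        rw [hZ, hU, ← hsumk]; ring
      have e2 : O - U = -((X - O) * k) := by rw [hU]; ring
      rw [e1, e2, norm_neg, norm_mul, norm_mul, habsc, habsk, habskb]
    · have e1 : Z - V = (X - O) * k := by
        rw [hZ, hV, ← hsumk]; ring
      have e2 : O - V = -((X - O) * kb) := by rw [hV]; ring
      rw [e1, e2, norm_neg, norm_mul, norm_mul, habsc, habsk, habskb]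
    · exact circles_ne (norm_nonneg _) (norm_nonneg _) hUV
  have hfinal : cinvert O X = Z := by
    rw [cinvert_eq hXO, hZ, ← habsc]
    push_cast
    have : ((‖X - O‖ : ℝ) : ℂ) ≠ 0 := by rw [habsc]; exact hdc
    field_simp
  rwa [hfinal]

lemma compass_invert {O E X : ℂ} (hO : Compass O) (hE : Compass E) (hX : Compass X)
    (hOE : ‖E - O‖ = 1) (hXO : X ≠ O) : Compass (cinvert O X) := by
  have hc : X - O ≠ 0 := sub_ne_zero.mpr hXO
  have hd0 : 0 < ‖X - O‖ := norm_pos_iff.mpr hc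
  obtain ⟨n, hn⟩ := pow_unbounded_of_one_lt (1/(2 * ‖X - O‖)) (one_lt_two (α := ℝ))
  set Y : ℂ := O + 2^n * (X - O) with hY
  have hYO : Y ≠ O := by
    intro h
    have h2 : (2:ℂ)^n * (X - O) = 0 := by rw [hY] at h; linear_combination h
    rcases mul_eq_zero.mp h2 with h' | h'
    · exact pow_ne_zero n two_ne_zero h'
    · exact hc h'
  have hYc : Compass Y := compass_double hO hX hXO n
  have habsY : ‖Y - O‖ = 2^n * ‖X - O‖ := by
    rw [hY, add_sub_cancel_left, norm_mul, norm_pow, Complex.norm_two]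
  have hfar : 1/2 < ‖Y - O‖ := by
    rw [habsY]
    rw [div_lt_iff₀ (by positivity)] at hn
    nlinarith [hn]
  have hW : Compass (cinvert O Y) := compass_invert_far hO hE hYc hOE hfar
  have hWO : cinvert O Y ≠ O := cinvert_ne hYO
  have hfin := compass_double hO hW hWO n
  have heq : O + 2^n * (cinvert O Y - O) = cinvert O X := by
    have e1 : cinvert O Y - O = (conj' (Y - O))⁻¹ := by unfold cinvert; ring
    have e2 : conj' (Y - O) = 2^n * conj' (X - O) := by
      rw [hY, add_sub_cancel_left, map_mul, map_pow, map_ofNat]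
    rw [e1, e2, mul_inv, ← mul_assoc, mul_inv_cancel₀ (pow_ne_zero n two_ne_zero), one_mul]
    unfold cinvert
    rfl
  rwa [heq] at hfin

/-- A point on the line through `A` and `B` is fixed by reflection. -/
lemma creflect_fixed {A B z : ℂ} (hAB : A ≠ B) (h : ∃ t : ℝ, z = A + (t:ℂ) * (B - A)) :
    creflect A B z = z := by
  have hBA : B - A ≠ 0 := sub_ne_zero.mpr (Ne.symm hAB)
  have hBA' : conj' (B - A) ≠ 0 := by
    rw [starRingEnd_apply]; exact star_ne_zero.mpr hBA
  obtain ⟨t, rfl⟩ := h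
  unfold creflect
  rw [add_sub_cancel_left, map_mul, Complex.conj_ofReal]
  have e : (B - A) * ((t:ℂ) * conj' (B - A)) / conj' (B - A) = (t:ℂ) * (B - A) := by
    rw [div_eq_iff hBA']; ring
  rw [e]

/-- Reflection is an isometry. -/
lemma creflect_isometry {A B z w : ℂ} (hAB : A ≠ B) :
    ‖creflect A B z - creflect A B w‖ = ‖z - w‖ := by
  have hBA : B - A ≠ 0 := sub_ne_zero.mpr (Ne.symm hAB)
  have hBA' : conj' (B - A) ≠ 0 := by
    rw [starRingEnd_apply]; exact star_ne_zero.mpr hBA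
  have habs : ‖B - A‖ ≠ 0 := norm_ne_zero_iff.mpr hBA
  have e : creflect A B z - creflect A B w = (B - A) * conj' (z - w) / conj' (B - A) := by
    unfold creflect
    rw [map_sub (starRingEnd ℂ) z w, map_sub (starRingEnd ℂ) z A, map_sub (starRingEnd ℂ) w A, map_sub (starRingEnd ℂ) B A]
    ring
  rw [e, norm_div, norm_mul, Complex.norm_conj, Complex.norm_conj,
    mul_comm, mul_div_assoc, div_self habs, mul_one]

/-- A fixed point of the reflection lies on the line. -/
lemma creflect_fixed_line {A B z : ℂ} (hAB : A ≠ B) (h : creflect A B z = z) :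
    ∃ t : ℝ, z = A + (t:ℂ) * (B - A) := by
  have hBA : B - A ≠ 0 := sub_ne_zero.mpr (Ne.symm hAB)
  have hBA' : conj' (B - A) ≠ 0 := by
    rw [starRingEnd_apply]; exact star_ne_zero.mpr hBA
  have hq : conj' ((z - A) / (B - A)) = (z - A) / (B - A) := by
    rw [map_div₀]
    rw [div_eq_div_iff hBA' hBA]
    unfold creflect at h
    have h3 : (B - A) * conj' (z - A) / conj' (B - A) = z - A := by
      linear_combination h
    rw [div_eq_iff hBA'] at h3
    linear_combination h3
  obtain ⟨r, hr⟩ := Complex.conj_eq_iff_real.mp hq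
  refine ⟨r, ?_⟩
  rw [div_eq_iff hBA] at hr
  linear_combination hr

/-- Three distinct points of the unit circle cannot lie on a common line. -/
lemma no_three_on_line {A B z₁ z₂ z₃ : ℂ} (hBA : B - A ≠ 0)
    (h₁ : ∃ t : ℝ, z₁ = A + (t:ℂ) * (B - A))
    (h₂ : ∃ t : ℝ, z₂ = A + (t:ℂ) * (B - A))
    (h₃ : ∃ t : ℝ, z₃ = A + (t:ℂ) * (B - A))
    (ha₁ : ‖z₁‖ = 1) (ha₂ : ‖z₂‖ = 1) (ha₃ : ‖z₃‖ = 1)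
    (h12 : z₁ ≠ z₂) (h13 : z₁ ≠ z₃) (h23 : z₂ ≠ z₃) : False := by
  obtain ⟨t₁, rfl⟩ := h₁
  obtain ⟨t₂, rfl⟩ := h₂
  obtain ⟨t₃, rfl⟩ := h₃
  set a := A.re; set b := A.im; set u₁ := (B - A).re; set u₂ := (B - A).im
  have hu : u₁^2 + u₂^2 ≠ 0 := by
    have hpos := Complex.normSq_pos.mpr hBA
    rw [Complex.normSq_apply] at hpos
    intro h
    nlinarith [hpos]
  have hnorm : ∀ t : ℝ, ‖A + (t:ℂ) * (B - A)‖ = 1 →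
      (a + t*u₁)^2 + (b + t*u₂)^2 = 1 := by
    intro t ht
    have h2 : Complex.normSq (A + (t:ℂ) * (B - A)) = 1 := by
      rw [← Complex.sq_norm, ht]; norm_num
    rw [Complex.normSq_apply] at h2
    simp only [Complex.add_re, Complex.add_im, Complex.mul_re, Complex.mul_im,
      Complex.ofReal_re, Complex.ofReal_im] at h2
    nlinarith [h2]
  have e₁ := hnorm t₁ ha₁
  have e₂ := hnorm t₂ ha₂
  have e₃ := hnorm t₃ ha₃
  have tne : t₁ ≠ t₂ ∧ t₁ ≠ t₃ ∧ t₂ ≠ t₃ := by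
    refine ⟨?_, ?_, ?_⟩ <;> intro h <;> [exact h12 (by rw [h]); exact h13 (by rw [h]);
      exact h23 (by rw [h])]
  have key : ∀ s t : ℝ, (a + s*u₁)^2 + (b + s*u₂)^2 = 1 → (a + t*u₁)^2 + (b + t*u₂)^2 = 1 →
      s ≠ t → (s + t)*(u₁^2 + u₂^2) + 2*(a*u₁ + b*u₂) = 0 := by
    intro s t hs ht hst
    have hfact : (s - t) * ((s + t)*(u₁^2 + u₂^2) + 2*(a*u₁ + b*u₂)) = 0 := by
      linear_combination hs - ht
    rcases mul_eq_zero.mp hfact with h' | h'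
    · exact absurd (by linarith : s = t) hst
    · exact h'
  have k12 := key t₁ t₂ e₁ e₂ tne.1
  have k13 := key t₁ t₃ e₁ e₃ tne.2.1
  have hfin : (t₂ - t₃) * (u₁^2 + u₂^2) = 0 := by linear_combination k12 - k13
  rcases mul_eq_zero.mp hfin with h' | h'
  · exact tne.2.2 (by linarith)
  · exact hu h'

/-- The fundamental inversion distance identity. -/
lemma inv_dist {s m : ℂ} (hs : s ≠ 0) (hm : m ≠ 0)
    (h : ‖s‖ = ‖s - m‖) :
    ‖(conj' s)⁻¹ - (conj' m)⁻¹‖ = ‖(conj' m)⁻¹‖ := by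
  have hcs : conj' s ≠ 0 := by rw [starRingEnd_apply]; exact star_ne_zero.mpr hs
  have hcm : conj' m ≠ 0 := by rw [starRingEnd_apply]; exact star_ne_zero.mpr hm
  have e : (conj' s)⁻¹ - (conj' m)⁻¹ = conj' (m - s) / (conj' s * conj' m) := by
    rw [map_sub (starRingEnd ℂ) m s, eq_div_iff (mul_ne_zero hcs hcm), sub_mul,
      inv_mul_cancel_left₀ hcs, mul_comm (conj' s) (conj' m), inv_mul_cancel_left₀ hcm]
  rw [e, norm_div, Complex.norm_conj, norm_mul, Complex.norm_conj, Complex.norm_conj,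
    norm_inv, Complex.norm_conj]
  rw [norm_sub_rev, ← h, div_mul_cancel_left₀ (norm_ne_zero_iff.mpr hs)]

/-- The reflection displacement is perpendicular to the direction of the line. -/
lemma creflect_perp {A B O : ℂ} (hAB : A ≠ B) :
    conj' (B - A) * (creflect A B O - O) + (B - A) * conj' (creflect A B O - O) = 0 := by
  have hBA : B - A ≠ 0 := sub_ne_zero.mpr (Ne.symm hAB)
  have hBA' : conj' (B - A) ≠ 0 := by
    rw [starRingEnd_apply]; exact star_ne_zero.mpr hBA
  have em : creflect A B O - O = (B - A) * conj' (O - A) / conj' (B - A) - (O - A) := by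
    unfold creflect; ring
  have ecm : conj' (creflect A B O - O)
      = conj' (B - A) * (O - A) / (B - A) - conj' (O - A) := by
    rw [em, map_sub, map_div₀, map_mul, Complex.conj_conj, Complex.conj_conj]
  have t1 : conj' (B - A) * ((B - A) * conj' (O - A) / conj' (B - A))
      = (B - A) * conj' (O - A) := by
    rw [mul_comm, div_mul_cancel₀ _ hBA']
  have t2 : (B - A) * (conj' (B - A) * (O - A) / (B - A))
      = conj' (B - A) * (O - A) := by
    rw [mul_comm, div_mul_cancel₀ _ hBA]
  rw [ecm, em]
  linear_combination t1 + t2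

/-- Two lines whose reflections displace `O` identically are parallel. -/
lemma parallel_of_perp {u v m : ℂ} (hm : m ≠ 0) (hu : u ≠ 0)
    (h1 : conj' u * m + u * conj' m = 0) (h2 : conj' v * m + v * conj' m = 0)
    (hind : LinearIndependent ℝ ![u, v]) : False := by
  have hmc : conj' m ≠ 0 := by rw [starRingEnd_apply]; exact star_ne_zero.mpr hm
  have huc : conj' u ≠ 0 := by rw [starRingEnd_apply]; exact star_ne_zero.mpr hu
  -- conj' u * v is real
  have hkey : conj' u * v * m = u * conj' v * m := by
    have a1 : v * (conj' u * m) = v * (- (u * conj' m)) := by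
      rw [show conj' u * m = - (u * conj' m) by linear_combination h1]
    have a2 : u * (conj' v * m) = u * (- (v * conj' m)) := by
      rw [show conj' v * m = - (v * conj' m) by linear_combination h2]
    linear_combination a1 - a2
  have hreal : conj' (conj' u * v) = conj' u * v := by
    have h3 : conj' u * v = u * conj' v := by
      have := mul_right_cancel₀ hm hkey
      exact this
    rw [map_mul, Complex.conj_conj, h3]
  obtain ⟨r, hr⟩ := Complex.conj_eq_iff_real.mp hreal
  obtain ⟨hv0, hnr⟩ := linearIndependent_fin2.mp hind
  simp only [Matrix.cons_val_one, Matrix.head_cons, Matrix.cons_val_zero] at hv0 hnr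
  by_cases hr0 : r = 0
  · apply hv0
    rw [hr0] at hr
    have : conj' u * v = 0 := by rw [hr]; norm_num
    rcases mul_eq_zero.mp this with h' | h'
    · exact absurd h' huc
    · exact h'
  · apply hnr (Complex.normSq u / r)
    have hrC : ((r:ℝ):ℂ) ≠ 0 := Complex.ofReal_ne_zero.mpr hr0
    rw [Complex.real_smul, Complex.ofReal_div, div_mul_eq_mul_div, div_eq_iff hrC]
    linear_combination u * hr - v * (Complex.mul_conj u)

lemma abs_w3_pow (k : ℕ) : ‖w3 ^ k‖ = 1 := by
  rw [norm_pow, abs_w3, one_pow]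

lemma w3_pow_ne_zero (k : ℕ) : (0:ℂ) ≠ w3 ^ k := by
  intro h
  have := abs_w3_pow k
  rw [← h] at this
  simp at this

lemma compass_w3_pow : ∀ k : ℕ, Compass (w3 ^ k)
  | 0 => by simpa using Compass.one
  | (k+1) => by
    have ih := compass_w3_pow k
    refine Compass.circle_circle 0 1 (w3^k) 0 _ Compass.zero Compass.one ih Compass.zero
      ?_ ?_ ?_
    · rw [sub_zero, sub_zero, abs_w3_pow, norm_one]
    · have e : w3^(k+1) - w3^k = w3^k * (w3 - 1) := by ring
      rw [e, norm_mul, abs_w3_pow, abs_w3_sub_one, zero_sub, norm_neg, abs_w3_pow,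
        one_mul]
    · exact circles_ne (norm_nonneg _) (norm_nonneg _) (w3_pow_ne_zero k)

lemma w3_pow3 : w3^3 = -1 := by
  have h2 : w3^2 = w3 - 1 := by rw [sq]; exact w3_sq
  have h3 : w3^3 = (w3 - 1) * w3 := by rw [pow_succ, h2]
  rw [h3]; linear_combination w3_sq

lemma exists_good_O {A B C D : ℂ} (hBA : B - A ≠ 0) (hDC : D - C ≠ 0) :
    ∃ O : ℂ, Compass O ∧ ‖O‖ = 1 ∧
      (¬ ∃ t : ℝ, O = A + (t:ℂ) * (B - A)) ∧ (¬ ∃ t : ℝ, O = C + (t:ℂ) * (D - C)) := by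
  classical
  set f : Fin 5 → ℂ := ![1, w3, w3^2, w3^3, w3^4] with hf
  have h2 : w3^2 = w3 - 1 := by rw [sq]; exact w3_sq
  have h4 : w3^4 = -w3 := by rw [show 4 = 3 + 1 by rfl, pow_succ, w3_pow3]; ring
  have hcomp : ∀ i, Compass (f i) := by
    intro i
    fin_cases i
    · simpa [hf] using compass_w3_pow 0
    · simpa [hf] using compass_w3_pow 1
    · simpa [hf] using compass_w3_pow 2
    · simpa [hf] using compass_w3_pow 3
    · simpa [hf] using compass_w3_pow 4
  have habs : ∀ i, ‖f i‖ = 1 := by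
    intro i
    fin_cases i
    · simpa [hf] using abs_w3_pow 0
    · simpa [hf] using abs_w3_pow 1
    · simpa [hf] using abs_w3_pow 2
    · simpa [hf] using abs_w3_pow 3
    · simpa [hf] using abs_w3_pow 4
  have hs3 : 0 < Real.sqrt 3 := Real.sqrt_pos.mpr (by norm_num)
  have hre : (f 0).re = 1 ∧ (f 1).re = 1/2 ∧ (f 2).re = -(1/2) ∧ (f 3).re = -1
      ∧ (f 4).re = -(1/2) := by
    refine ⟨by simp [hf], by simp [hf, w3_re], ?_, ?_, ?_⟩
    · show (w3^2).re = -(1/2)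
      rw [h2, Complex.sub_re, Complex.one_re, w3_re]; norm_num
    · show (w3^3).re = -1
      rw [w3_pow3]; simp
    · show (w3^4).re = -(1/2)
      rw [h4, Complex.neg_re, w3_re]
  have him : (f 0).im = 0 ∧ (f 1).im = Real.sqrt 3 / 2 ∧ (f 2).im = Real.sqrt 3 / 2
      ∧ (f 3).im = 0 ∧ (f 4).im = -(Real.sqrt 3 / 2) := by
    refine ⟨by simp [hf], by simp [hf, w3_im], ?_, ?_, ?_⟩
    · show (w3^2).im = Real.sqrt 3 / 2
      rw [h2, Complex.sub_im, Complex.one_im, w3_im]; norm_num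
    · show (w3^3).im = 0
      rw [w3_pow3]; simp
    · show (w3^4).im = -(Real.sqrt 3 / 2)
      rw [h4, Complex.neg_im, w3_im]
  obtain ⟨r0, r1, r2, r3, r4⟩ := hre
  obtain ⟨i0, i1, i2, i3, i4⟩ := him
  have hne : ∀ i j : Fin 5, i ≠ j → f i ≠ f j := by
    intro i j hij heq
    have hr := congrArg Complex.re heq
    have hi := congrArg Complex.im heq
    fin_cases i <;> fin_cases j <;> first
      | exact absurd rfl hij
      | (norm_num [hf, h2, h4, w3_pow3, Complex.sub_re, Complex.sub_im, Complex.neg_re,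
            Complex.neg_im, Complex.one_re, Complex.one_im, w3_re, w3_im] at hr; done)
      | (norm_num [hf, h2, h4, w3_pow3, Complex.sub_re, Complex.sub_im, Complex.neg_re,
            Complex.neg_im, Complex.one_re, Complex.one_im, w3_re, w3_im] at hr hi <;>
          linarith [hs3])
  by_contra hcon
  push_neg at hcon
  have hall : ∀ i : Fin 5, (∃ t : ℝ, f i = A + (t:ℂ) * (B - A)) ∨
      (∃ t : ℝ, f i = C + (t:ℂ) * (D - C)) := by
    intro i
    by_cases hL : ∃ t : ℝ, f i = A + (t:ℂ) * (B - A)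
    · exact Or.inl hL
    · exact Or.inr (hcon (f i) (hcomp i) (habs i) (not_exists.mp hL))
  set s1 := Finset.univ.filter (fun i : Fin 5 => ∃ t : ℝ, f i = A + (t:ℂ) * (B - A)) with hs1
  have hcards : s1.card +
      (Finset.univ.filter (fun i : Fin 5 => ¬ ∃ t : ℝ, f i = A + (t:ℂ) * (B - A))).card = 5 := by
    rw [hs1, Finset.card_filter_add_card_filter_not]
    simp
  rcases lt_or_ge 2 s1.card with hgt | hle
  · obtain ⟨i, j, k, hi, hj, hk, hij, hik, hjk⟩ := Finset.two_lt_card_iff.mp hgt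
    rw [hs1, Finset.mem_filter] at hi hj hk
    exact no_three_on_line hBA hi.2 hj.2 hk.2 (habs i) (habs j) (habs k)
      (hne i j hij) (hne i k hik) (hne j k hjk)
  · have hgt2 : 2 < (Finset.univ.filter
        (fun i : Fin 5 => ¬ ∃ t : ℝ, f i = A + (t:ℂ) * (B - A))).card := by omega
    obtain ⟨i, j, k, hi, hj, hk, hij, hik, hjk⟩ := Finset.two_lt_card_iff.mp hgt2
    rw [Finset.mem_filter] at hi hj hk
    exact no_three_on_line hDC ((hall i).resolve_left hi.2) ((hall j).resolve_left hj.2)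
      ((hall k).resolve_left hk.2) (habs i) (habs j) (habs k)
      (hne i j hij) (hne i k hik) (hne j k hjk)

lemma mem_line_exists {A B S : ℂ} (h : S ∈ affineSpan ℝ ({A, B} : Set ℂ)) :
    ∃ t : ℝ, S = A + (t:ℂ) * (B - A) := by
  have h1 : S -ᵥ A ∈ (affineSpan ℝ ({A, B} : Set ℂ)).direction :=
    AffineSubspace.vsub_mem_direction h (left_mem_affineSpan_pair ℝ A B)
  rw [direction_affineSpan] at h1
  obtain ⟨t, ht⟩ := mem_vectorSpan_pair_rev.mp h1
  refine ⟨t, ?_⟩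
  have ht' : (t:ℂ) * (B - A) = S - A := by
    rw [← Complex.real_smul]; exact ht
  linear_combination -ht'

/-- The intersection point of two non-parallel lines, each through two
compass-constructable points, is compass-constructable. -/
theorem line_line_inter_constructable (A B C D : ℂ)
    (hA : Compass A) (hB : Compass B) (hC : Compass C) (hD : Compass D)
    (hAB : A ≠ B) (hCD : C ≠ D)
    (hpar : LinearIndependent ℝ ![B - A, D - C])
    (S : ℂ) (hS₁ : S ∈ affineSpan ℝ ({A, B} : Set ℂ))
    (hS₂ : S ∈ affineSpan ℝ ({C, D} : Set ℂ)) :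
    Compass S := by
  have hBA : B - A ≠ 0 := sub_ne_zero.mpr (Ne.symm hAB)
  have hDC : D - C ≠ 0 := sub_ne_zero.mpr (Ne.symm hCD)
  have hS₁' := mem_line_exists hS₁
  have hS₂' := mem_line_exists hS₂
  obtain ⟨O, hOcomp, hOabs, hOL1, hOL2⟩ := exists_good_O hBA hDC
  -- the unit radius point for inversion centred at O
  have hOE : ‖(0:ℂ) - O‖ = 1 := by
    rw [zero_sub, norm_neg, hOabs]
  by_cases hSO : S = O
  · rwa [hSO]
  -- reflections of O in the two lines
  set M₁ := creflect A B O with hM₁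
  set M₂ := creflect C D O with hM₂
  have hM₁c : Compass M₁ := compass_reflect hA hB hOcomp hAB
  have hM₂c : Compass M₂ := compass_reflect hC hD hOcomp hCD
  have hM₁O : M₁ ≠ O := by
    intro h; exact hOL1 (creflect_fixed_line hAB h)
  have hM₂O : M₂ ≠ O := by
    intro h; exact hOL2 (creflect_fixed_line hCD h)
  -- centres of the inverted lines
  set P₁ := cinvert O M₁ with hP₁
  set P₂ := cinvert O M₂ with hP₂
  have hP₁c : Compass P₁ := compass_invert hOcomp Compass.zero hM₁c hOE hM₁O
  have hP₂c : Compass P₂ := compass_invert hOcomp Compass.zero hM₂c hOE hM₂O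
  -- key distance identities
  have hdist : ∀ (X Y : ℂ) (hXY : X ≠ Y) (hrefl : creflect X Y S = S),
      ‖S - O‖ = ‖S - creflect X Y O‖ := by
    intro X Y hXY hrefl
    calc ‖S - O‖ = ‖creflect X Y S - creflect X Y O‖ :=
          (creflect_isometry hXY).symm
    _ = ‖S - creflect X Y O‖ := by rw [hrefl]
  have hfix₁ : creflect A B S = S := creflect_fixed hAB hS₁'
  have hfix₂ : creflect C D S = S := creflect_fixed hCD hS₂'
  have hd₁ : ‖cinvert O S - P₁‖ = ‖O - P₁‖ := by
    have e1 : cinvert O S - P₁ = (conj' (S - O))⁻¹ - (conj' (M₁ - O))⁻¹ := by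
      rw [hP₁]; unfold cinvert; ring
    have e2 : O - P₁ = -((conj' (M₁ - O))⁻¹) := by
      rw [hP₁]; unfold cinvert; ring
    rw [e1, e2, norm_neg]
    apply inv_dist (sub_ne_zero.mpr hSO) (sub_ne_zero.mpr hM₁O)
    have : S - O - (M₁ - O) = S - M₁ := by ring
    rw [this]
    simpa [hM₁] using hdist A B hAB hfix₁
  have hd₂ : ‖cinvert O S - P₂‖ = ‖O - P₂‖ := by
    have e1 : cinvert O S - P₂ = (conj' (S - O))⁻¹ - (conj' (M₂ - O))⁻¹ := by
      rw [hP₂]; unfold cinvert; ring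
    have e2 : O - P₂ = -((conj' (M₂ - O))⁻¹) := by
      rw [hP₂]; unfold cinvert; ring
    rw [e1, e2, norm_neg]
    apply inv_dist (sub_ne_zero.mpr hSO) (sub_ne_zero.mpr hM₂O)
    have : S - O - (M₂ - O) = S - M₂ := by ring
    rw [this]
    simpa [hM₂] using hdist C D hCD hfix₂
  -- the two centres are distinct
  have hP₁₂ : P₁ ≠ P₂ := by
    intro h
    have hM : M₁ = M₂ := by
      have := congrArg (cinvert O) h
      rwa [hP₁, hP₂, cinvert_cinvert hM₁O, cinvert_cinvert hM₂O] at this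
    have hperp₁ := creflect_perp (A := A) (B := B) (O := O) hAB
    have hperp₂ := creflect_perp (A := C) (B := D) (O := O) hCD
    rw [← hM₁] at hperp₁
    rw [← hM₂, ← hM] at hperp₂
    exact parallel_of_perp (sub_ne_zero.mpr hM₁O) hBA hperp₁ hperp₂ hpar
  -- the inverted intersection point is constructable
  have hS'c : Compass (cinvert O S) :=
    Compass.circle_circle P₁ O P₂ O _ hP₁c hOcomp hP₂c hOcomp hd₁ hd₂
      (circles_ne (norm_nonneg _) (norm_nonneg _) hP₁₂)
  -- invert back
  have hS'O : cinvert O S ≠ O := cinvert_ne hSO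
  have := compass_invert hOcomp Compass.zero hS'c hOE hS'O
  rwa [cinvert_cinvert hSO] at this
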